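/- In a 3-connected graph G, if three edges e1, e2, e3 form a path of length 3 (a chain v1-v2-v3-v4 with distinct vertices), then there exists a simple cycle of G containing all three edges. -/

import Mathlib

/-- `G` is `k`-vertex-connected: more than `k` vertices and no set of fewer than `k`
vertices disconnects it. -/
def IsKConnected {V : Type*} [Fintype V] (G : SimpleGraph V) (k : ℕ) : Prop :=
  k + 1 ≤ Fintype.card V ∧
    ∀ S : Finset V, S.card < k → (G.induce (↑S : Set V)ᶜ).Connected

/-- In a 3-connected graph, three edges forming a path `v1-v2-v3-v4` with distinct
vertices lie on a common simple cycle. -/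
theorem cycle_through_chain {V : Type*} [Fintype V]
    (G : SimpleGraph V) (h3 : IsKConnected G 3)
    (v1 v2 v3 v4 : V)
    (h12 : G.Adj v1 v2) (h23 : G.Adj v2 v3) (h34 : G.Adj v3 v4)
    (hdist : List.Pairwise (· ≠ ·) [v1, v2, v3, v4]) :
    ∃ (w : V) (c : G.Walk w w), c.IsCycle ∧
      s(v1, v2) ∈ c.edges ∧ s(v2, v3) ∈ c.edges ∧ s(v3, v4) ∈ c.edges := by
  simp only [List.pairwise_cons, List.mem_cons, List.mem_singleton,
    List.not_mem_nil] at hdist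
  obtain ⟨h1, h2, -, -⟩ := hdist
  have h12' : v1 ≠ v2 := h1 v2 (by simp)
  have h13 : v1 ≠ v3 := h1 v3 (by simp)
  have h14 : v1 ≠ v4 := h1 v4 (by simp)
  have h23' : v2 ≠ v3 := h2 v3 (by simp)
  have h24 : v2 ≠ v4 := h2 v4 (by simp)
  classical
  set S : Finset V := {v2, v3} with hS
  have hcard : S.card < 3 := by
    have h : S.card ≤ 2 := (Finset.card_insert_le _ _).trans (by simp)
    omega
  have hconn := h3.2 S hcard
  have hv4 : v4 ∈ (↑S : Set V)ᶜ := by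
    simp [hS, h24.symm, (h34.ne).symm]
  have hv1 : v1 ∈ (↑S : Set V)ᶜ := by
    simp [hS, h12', h13]
  obtain ⟨w0⟩ := hconn ⟨v4, hv4⟩ ⟨v1, hv1⟩
  let p0 : (G.induce (↑S : Set V)ᶜ).Path ⟨v4, hv4⟩ ⟨v1, hv1⟩ := w0.toPath
  let f : G.induce (↑S : Set V)ᶜ ↪g G := SimpleGraph.Embedding.induce _
  let p' : G.Walk v4 v1 := (SimpleGraph.Walk.map f.toHom p0.1).copy rfl rfl
  have hp'path : p'.IsPath := by
    simp only [p']
    erw [SimpleGraph.Walk.isPath_copy]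
    exact SimpleGraph.Walk.map_isPath_of_injective f.injective p0.2
  have hnotmem : ∀ v ∈ (↑S : Set V), v ∉ p'.support := by
    intro v hv hmem
    simp only [p'] at hmem
    erw [SimpleGraph.Walk.support_copy, SimpleGraph.Walk.support_map, List.mem_map] at hmem
    obtain ⟨a, -, ha⟩ := hmem
    subst ha
    exact a.2 hv
  have hv2S : v2 ∈ (↑S : Set V) := by simp [hS]
  have hv3S : v3 ∈ (↑S : Set V) := by simp [hS]
  have hnot2 := hnotmem v2 hv2S
  have hnot3 := hnotmem v3 hv3S
  let q : G.Walk v2 v1 := SimpleGraph.Walk.cons h23 (SimpleGraph.Walk.cons h34 p')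
  have hqpath : q.IsPath := by
    rw [SimpleGraph.Walk.cons_isPath_iff, SimpleGraph.Walk.cons_isPath_iff]
    refine ⟨⟨hp'path, hnot3⟩, ?_⟩
    simp only [SimpleGraph.Walk.support_cons, List.mem_cons]
    rintro (h | h)
    · exact h23' h
    · exact hnot2 h
  have hedge : s(v1, v2) ∉ q.edges := by
    simp only [q, SimpleGraph.Walk.edges_cons, List.mem_cons]
    rintro (h | h | h)
    · rw [Sym2.eq_iff] at h
      rcases h with ⟨ha, -⟩ | ⟨ha, -⟩
      · exact h12' ha
      · exact h13 ha
    · rw [Sym2.eq_iff] at h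
      rcases h with ⟨ha, -⟩ | ⟨ha, -⟩
      · exact h13 ha
      · exact h14 ha
    · exact hnot2 (SimpleGraph.Walk.snd_mem_support_of_mem_edges p' h)
  refine ⟨v1, SimpleGraph.Walk.cons h12 q, ?_, ?_, ?_, ?_⟩
  · exact (SimpleGraph.Walk.cons_isCycle_iff q h12).mpr ⟨hqpath, hedge⟩
  · simp [q]
  · simp [q]
  · simp [q]
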